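/- Under the hypotheses of the preceding statement (deg(R) ≥ deg(Q₁), deg(Q₂), R(im) ≠ 0 for all real m, μ > max(deg Q₁, deg Q₂)+1), the product f ⋆ g(m) = (1/R(im)) ∫_{−∞}^{∞} Q₁(i(m−m₁)) f(m−m₁) Q₂(im₁) g(m₁) dm₁ makes E_{(β,μ)} into a Banach algebra (after rescaling the norm by the constant C₅): the product is bilinear, and ‖f ⋆ g‖ ≤ C₅ ‖f‖ ‖g‖. -/

import Mathlib

open MeasureTheory Real Complex Polynomial


lemma poly_upper (P : Polynomial ℂ) : ∃ C : ℝ, 0 < C ∧ ∀ x : ℝ,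
    ‖P.eval (Complex.I * x)‖ ≤ C * (1 + |x|) ^ (P.natDegree : ℝ) := by
  refine ⟨(∑ k ∈ Finset.range (P.natDegree + 1), ‖P.coeff k‖) + 1,
    by positivity, fun x => ?_⟩
  have h1 : (1:ℝ) ≤ 1 + |x| := by have := abs_nonneg x; linarith
  rw [Real.rpow_natCast]
  calc ‖P.eval (Complex.I * x)‖
      ≤ ∑ k ∈ Finset.range (P.natDegree + 1), ‖P.coeff k * (Complex.I * x) ^ k‖ := by
        rw [Polynomial.eval_eq_sum_range]; exact norm_sum_le _ _
    _ ≤ ∑ k ∈ Finset.range (P.natDegree + 1), ‖P.coeff k‖ * (1 + |x|) ^ P.natDegree := by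
        refine Finset.sum_le_sum fun k hk => ?_
        rw [norm_mul, norm_pow, norm_mul, Complex.norm_I, Complex.norm_real, Real.norm_eq_abs, one_mul]
        refine mul_le_mul_of_nonneg_left ?_ (norm_nonneg _)
        calc |x| ^ k ≤ (1 + |x|) ^ k := by
              exact pow_le_pow_left₀ (abs_nonneg x) (by linarith) k
          _ ≤ (1 + |x|) ^ P.natDegree :=
              pow_le_pow_right₀ h1 (Nat.lt_succ_iff.mp (Finset.mem_range.mp hk))
    _ = (∑ k ∈ Finset.range (P.natDegree + 1), ‖P.coeff k‖) * (1 + |x|) ^ P.natDegree := by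
        rw [← Finset.sum_mul]
    _ ≤ _ := by
        have : (0:ℝ) ≤ (1 + |x|) ^ P.natDegree := by positivity
        nlinarith [Finset.sum_nonneg (fun k (_ : k ∈ Finset.range (P.natDegree+1)) => norm_nonneg (P.coeff k))]

lemma poly_lower (R : Polynomial ℂ) (hR : ∀ m : ℝ, R.eval (Complex.I * m) ≠ 0) :
    ∃ c : ℝ, 0 < c ∧ ∀ x : ℝ,
      c * (1 + |x|) ^ (R.natDegree : ℝ) ≤ ‖R.eval (Complex.I * x)‖ := by
  have hR0 : R ≠ 0 := fun h => hR 0 (by simp [h])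
  set n := R.natDegree with hn
  set L := ‖R.coeff n‖ with hL
  have hLpos : 0 < L := by
    exact norm_pos_iff.mpr (by rw [hn, ← Polynomial.leadingCoeff]; exact Polynomial.leadingCoeff_ne_zero.mpr hR0)
  set S := ∑ k ∈ Finset.range n, ‖R.coeff k‖ with hS
  have hSnn : 0 ≤ S := Finset.sum_nonneg fun k _ => norm_nonneg _
  set M : ℝ := max 1 (2 * S / L) with hM
  have hM1 : (1:ℝ) ≤ M := le_max_left _ _
  -- tail bound
  have htail : ∀ x : ℝ, M ≤ |x| →
      L / 2 * |x| ^ n ≤ ‖R.eval (Complex.I * x)‖ := by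
    intro x hx
    have hx1 : (1:ℝ) ≤ |x| := le_trans hM1 hx
    have hx2 : 2 * S / L ≤ |x| := le_trans (le_max_right _ _) hx
    have hsplit : R.eval (Complex.I * x) =
        R.coeff n * (Complex.I * x) ^ n +
          ∑ k ∈ Finset.range n, R.coeff k * (Complex.I * x) ^ k := by
      rw [Polynomial.eval_eq_sum_range, Finset.sum_range_succ]; ring
    have habs1 : ‖R.coeff n * (Complex.I * x) ^ n‖ = L * |x| ^ n := by
      rw [norm_mul, norm_pow, norm_mul, Complex.norm_I, Complex.norm_real, Real.norm_eq_abs, one_mul]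
    have habs2 : ‖∑ k ∈ Finset.range n, R.coeff k * (Complex.I * x) ^ k‖
        ≤ S * |x| ^ (n - 1) := by
      calc ‖∑ k ∈ Finset.range n, R.coeff k * (Complex.I * x) ^ k‖
          ≤ ∑ k ∈ Finset.range n, ‖R.coeff k * (Complex.I * x) ^ k‖ :=
            norm_sum_le _ _
        _ ≤ ∑ k ∈ Finset.range n, ‖R.coeff k‖ * |x| ^ (n - 1) := by
            refine Finset.sum_le_sum fun k hk => ?_
            rw [norm_mul, norm_pow, norm_mul, Complex.norm_I, Complex.norm_real, Real.norm_eq_abs, one_mul]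
            refine mul_le_mul_of_nonneg_left ?_ (norm_nonneg _)
            exact pow_le_pow_right₀ hx1 (Nat.le_sub_one_of_lt (Finset.mem_range.mp hk))
        _ = S * |x| ^ (n - 1) := by rw [← Finset.sum_mul]
    have hlow : L * |x| ^ n - S * |x| ^ (n - 1) ≤ ‖R.eval (Complex.I * x)‖ := by
      have h := norm_add_le (R.eval (Complex.I * x))
        (-(∑ k ∈ Finset.range n, R.coeff k * (Complex.I * x) ^ k))
      rw [hsplit] at h
      simp only [add_neg_cancel_right, norm_neg] at h
      rw [← hsplit] at h
      rw [habs1] at h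
      linarith
    have hmain : L / 2 * |x| ^ n ≤ L * |x| ^ n - S * |x| ^ (n - 1) := by
      rcases Nat.eq_zero_or_pos n with h0 | hpos
      · have hS0 : S = 0 := by simp [hS, h0]
        simp only [h0, pow_zero, Nat.zero_sub]
        rw [hS0]; nlinarith
      · have hxe : |x| ^ n = |x| ^ (n - 1) * |x| := by
          rw [← pow_succ, Nat.sub_add_cancel hpos]
        have hxp : (0:ℝ) < |x| ^ (n - 1) := pow_pos (by linarith) _
        have hSx : S * |x| ^ (n - 1) ≤ L / 2 * |x| ^ n := by
          rw [hxe, ← mul_assoc]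
          have : S ≤ L / 2 * |x| := by
            rw [div_mul_eq_mul_div, le_div_iff₀ (by norm_num)] at *
            have := (div_le_iff₀ hLpos).mp hx2
            nlinarith
          nlinarith
        linarith
    linarith
  -- compact part
  obtain ⟨x₀, hx₀mem, hx₀min⟩ := (isCompact_Icc (a := -M) (b := M)).exists_isMinOn
    (Set.nonempty_Icc.mpr (by linarith))
    (continuous_norm.comp ((R.continuous_aeval).comp
      (continuous_const.mul Complex.continuous_ofReal))).continuousOn
  set ε := ‖R.eval (Complex.I * x₀)‖ with hε
  have hεpos : 0 < ε := norm_pos_iff.mpr (hR x₀)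
  refine ⟨min (L / 2 / 2 ^ n) (ε / (1 + M) ^ n), lt_min (by positivity) (by positivity),
    fun x => ?_⟩
  rw [Real.rpow_natCast]
  rcases le_or_gt M |x| with hcase | hcase
  · have h1 : (1:ℝ) ≤ |x| := le_trans hM1 hcase
    calc min (L / 2 / 2 ^ n) (ε / (1 + M) ^ n) * (1 + |x|) ^ n
        ≤ L / 2 / 2 ^ n * (1 + |x|) ^ n := by
          exact mul_le_mul_of_nonneg_right (min_le_left _ _) (by positivity)
      _ ≤ L / 2 / 2 ^ n * (2 * |x|) ^ n := by
          refine mul_le_mul_of_nonneg_left (pow_le_pow_left₀ (by positivity) (by linarith) n) (by positivity)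
      _ = L / 2 * |x| ^ n := by
          rw [mul_pow]; field_simp
      _ ≤ _ := htail x hcase
  · have hxM : x ∈ Set.Icc (-M) M := by
      constructor <;> [linarith [neg_abs_le x]; linarith [le_abs_self x]]
    have hεle : ε ≤ ‖R.eval (Complex.I * x)‖ := hx₀min hxM
    calc min (L / 2 / 2 ^ n) (ε / (1 + M) ^ n) * (1 + |x|) ^ n
        ≤ ε / (1 + M) ^ n * (1 + M) ^ n := by
          refine mul_le_mul (min_le_right _ _) (pow_le_pow_left₀ (by positivity) (by linarith [abs_nonneg x]) n) (by positivity) (by positivity)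
      _ = ε := by field_simp
      _ ≤ _ := hεle

lemma one_le_one_add_abs (x : ℝ) : (1:ℝ) ≤ 1 + |x| := by
  have := abs_nonneg x; linarith

lemma integrable_japanese {a : ℝ} (ha : 1 < a) :
    Integrable (fun t : ℝ => (1 + |t|) ^ (-a)) := by
  have := integrable_one_add_norm (E := ℝ) (μ := volume) (r := a) (by simpa using ha)
  simpa [Real.norm_eq_abs] using this

lemma conv_bound {a b : ℝ} (ha : 1 < a) (hb : 1 < b) :
    ∃ K : ℝ, 0 < K ∧ ∀ m : ℝ,
      (∫ t : ℝ, (1 + |m - t|) ^ (-a) * (1 + |t|) ^ (-b)) ≤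
        K * (1 + |m|) ^ (-(min a b)) := by
  have ia := integrable_japanese ha
  have ib := integrable_japanese hb
  set Ia : ℝ := ∫ t : ℝ, (1 + |t|) ^ (-a) with hIa
  set Ib : ℝ := ∫ t : ℝ, (1 + |t|) ^ (-b) with hIb
  have hIann : 0 ≤ Ia := integral_nonneg fun t => by positivity
  have hIbnn : 0 ≤ Ib := integral_nonneg fun t => by positivity
  refine ⟨(2:ℝ) ^ a * Ib + (2:ℝ) ^ b * Ia + 1, by positivity, fun m => ?_⟩
  have h1m : (1:ℝ) ≤ 1 + |m| := one_le_one_add_abs m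
  -- translate integrability
  have iam : Integrable (fun t : ℝ => (1 + |m - t|) ^ (-a)) := by
    simpa using ia.comp_sub_left m
  have hfg : Integrable (fun t : ℝ => (1 + |m - t|) ^ (-a) * (1 + |t|) ^ (-b)) := by
    refine ib.mono ?_ (Filter.Eventually.of_forall fun t => ?_)
    · exact (iam.aestronglyMeasurable.mul ib.aestronglyMeasurable)
    · rw [Real.norm_eq_abs, Real.norm_eq_abs,
        _root_.abs_of_nonneg (show (0:ℝ) ≤ (1 + |m - t|) ^ (-a) * (1 + |t|) ^ (-b) by positivity),
        _root_.abs_of_nonneg (show (0:ℝ) ≤ (1 + |t|) ^ (-b) by positivity)]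
      have : (1 + |m - t|) ^ (-a) ≤ 1 :=
        Real.rpow_le_one_of_one_le_of_nonpos (one_le_one_add_abs _) (by linarith)
      nlinarith [Real.rpow_nonneg (by positivity : (0:ℝ) ≤ 1 + |t|) (-b),
        Real.rpow_nonneg (by positivity : (0:ℝ) ≤ 1 + |m - t|) (-a)]
  set s : Set ℝ := {t : ℝ | |t| ≤ |m| / 2} with hs
  have hsm : MeasurableSet s := measurableSet_le (by fun_prop) (by fun_prop)
  -- bound on s : (1 + |m-t|)^(-a) ≤ 2^a * (1+|m|)^(-a)
  have hones : ∀ t ∈ s, (1 + |m - t|) ^ (-a) ≤ (2:ℝ) ^ a * (1 + |m|) ^ (-a) := by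
    intro t ht
    have ht' : |t| ≤ |m| / 2 := ht
    have h1 : (1 + |m|) / 2 ≤ 1 + |m - t| := by
      have h2 : |m| - |t| ≤ |m - t| := abs_sub_abs_le_abs_sub m t
      linarith
    have key : ((1 + |m|) / 2) ^ (-a) = (2:ℝ) ^ a * (1 + |m|) ^ (-a) := by
      rw [Real.div_rpow (by positivity) (by norm_num), Real.rpow_neg (by norm_num : (0:ℝ) ≤ 2)]
      field_simp
    rw [← key]
    exact Real.rpow_le_rpow_of_nonpos (by positivity) h1 (by linarith)
  have honesc : ∀ t ∈ sᶜ, (1 + |t|) ^ (-b) ≤ (2:ℝ) ^ b * (1 + |m|) ^ (-b) := by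
    intro t ht
    have ht' : |m| / 2 < |t| := by
      simpa [hs, not_le] using ht
    have h1 : (1 + |m|) / 2 ≤ 1 + |t| := by linarith
    have key : ((1 + |m|) / 2) ^ (-b) = (2:ℝ) ^ b * (1 + |m|) ^ (-b) := by
      rw [Real.div_rpow (by positivity) (by norm_num), Real.rpow_neg (by norm_num : (0:ℝ) ≤ 2)]
      field_simp
    rw [← key]
    exact Real.rpow_le_rpow_of_nonpos (by positivity) h1 (by linarith)
  rw [← integral_add_compl hsm hfg]
  have hbound1 : (∫ t in s, (1 + |m - t|) ^ (-a) * (1 + |t|) ^ (-b)) ≤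
      (2:ℝ) ^ a * (1 + |m|) ^ (-a) * Ib := by
    calc (∫ t in s, (1 + |m - t|) ^ (-a) * (1 + |t|) ^ (-b))
        ≤ ∫ t in s, (2:ℝ) ^ a * (1 + |m|) ^ (-a) * (1 + |t|) ^ (-b) := by
          refine setIntegral_mono_on hfg.integrableOn
            ((ib.const_mul _).integrableOn) hsm fun t ht => ?_
          exact mul_le_mul_of_nonneg_right (hones t ht) (by positivity)
      _ = (2:ℝ) ^ a * (1 + |m|) ^ (-a) * ∫ t in s, (1 + |t|) ^ (-b) := by
          rw [integral_const_mul]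
      _ ≤ (2:ℝ) ^ a * (1 + |m|) ^ (-a) * Ib := by
          refine mul_le_mul_of_nonneg_left ?_ (by positivity)
          exact setIntegral_le_integral ib (Filter.Eventually.of_forall fun t => by positivity)
  have hbound2 : (∫ t in sᶜ, (1 + |m - t|) ^ (-a) * (1 + |t|) ^ (-b)) ≤
      (2:ℝ) ^ b * (1 + |m|) ^ (-b) * Ia := by
    calc (∫ t in sᶜ, (1 + |m - t|) ^ (-a) * (1 + |t|) ^ (-b))
        ≤ ∫ t in sᶜ, (1 + |m - t|) ^ (-a) * ((2:ℝ) ^ b * (1 + |m|) ^ (-b)) := by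
          refine setIntegral_mono_on hfg.integrableOn
            ((iam.mul_const _).integrableOn) hsm.compl fun t ht => ?_
          exact mul_le_mul_of_nonneg_left (honesc t ht) (by positivity)
      _ = (2:ℝ) ^ b * (1 + |m|) ^ (-b) * ∫ t in sᶜ, (1 + |m - t|) ^ (-a) := by
          rw [integral_mul_const]; ring
      _ ≤ (2:ℝ) ^ b * (1 + |m|) ^ (-b) * Ia := by
          refine mul_le_mul_of_nonneg_left ?_ (by positivity)
          calc (∫ t in sᶜ, (1 + |m - t|) ^ (-a)) ≤ ∫ t : ℝ, (1 + |m - t|) ^ (-a) :=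
                setIntegral_le_integral iam (Filter.Eventually.of_forall fun t => by positivity)
            _ = Ia := integral_sub_left_eq_self (fun t : ℝ => (1 + |t|) ^ (-a)) volume m
  have hmono1 : (1 + |m|) ^ (-a) ≤ (1 + |m|) ^ (-(min a b)) :=
    Real.rpow_le_rpow_of_exponent_le h1m (neg_le_neg (min_le_left a b))
  have hmono2 : (1 + |m|) ^ (-b) ≤ (1 + |m|) ^ (-(min a b)) :=
    Real.rpow_le_rpow_of_exponent_le h1m (neg_le_neg (min_le_right a b))
  have hp : (0:ℝ) ≤ (1 + |m|) ^ (-(min a b)) := by positivity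
  calc (∫ t in s, (1 + |m - t|) ^ (-a) * (1 + |t|) ^ (-b)) +
        ∫ t in sᶜ, (1 + |m - t|) ^ (-a) * (1 + |t|) ^ (-b)
      ≤ (2:ℝ) ^ a * (1 + |m|) ^ (-a) * Ib + (2:ℝ) ^ b * (1 + |m|) ^ (-b) * Ia :=
        add_le_add hbound1 hbound2
    _ ≤ (2:ℝ) ^ a * (1 + |m|) ^ (-(min a b)) * Ib +
        (2:ℝ) ^ b * (1 + |m|) ^ (-(min a b)) * Ia := by
        gcongr <;> positivity
    _ ≤ ((2:ℝ) ^ a * Ib + (2:ℝ) ^ b * Ia + 1) * (1 + |m|) ^ (-(min a b)) := by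
        nlinarith [hp]


lemma integrable_conv {a b : ℝ} (ha : 1 < a) (hb : 1 < b) (m : ℝ) :
    Integrable (fun t : ℝ => (1 + |m - t|) ^ (-a) * (1 + |t|) ^ (-b)) := by
  have ia := integrable_japanese ha
  have ib := integrable_japanese hb
  have iam : Integrable (fun t : ℝ => (1 + |m - t|) ^ (-a)) := by
    simpa using ia.comp_sub_left m
  refine ib.mono (iam.aestronglyMeasurable.mul ib.aestronglyMeasurable)
    (Filter.Eventually.of_forall fun t => ?_)
  rw [Real.norm_eq_abs, Real.norm_eq_abs,
    _root_.abs_of_nonneg (show (0:ℝ) ≤ (1 + |m - t|) ^ (-a) * (1 + |t|) ^ (-b) by positivity),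
    _root_.abs_of_nonneg (show (0:ℝ) ≤ (1 + |t|) ^ (-b) by positivity)]
  have h : (1 + |m - t|) ^ (-a) ≤ 1 :=
    Real.rpow_le_one_of_one_le_of_nonpos (one_le_one_add_abs _) (by linarith)
  nlinarith [Real.rpow_nonneg (show (0:ℝ) ≤ 1 + |t| by positivity) (-b),
    Real.rpow_nonneg (show (0:ℝ) ≤ 1 + |m - t| by positivity) (-a)]

noncomputable def Enorm (β μ : ℝ) (h : ℝ → ℂ) : ℝ :=
  ⨆ m : ℝ, (1 + |m|) ^ μ * Real.exp (β * |m|) * ‖h m‖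

def memE (β μ : ℝ) (h : ℝ → ℂ) : Prop :=
  Continuous h ∧ BddAbove (Set.range fun m : ℝ =>
    (1 + |m|) ^ μ * Real.exp (β * |m|) * ‖h m‖)

lemma Enorm_nonneg {β μ : ℝ} {f : ℝ → ℂ} (hf : memE β μ f) : 0 ≤ Enorm β μ f :=
  le_trans (by positivity) (le_ciSup hf.2 0)

lemma memE_pointwise {β μ : ℝ} {f : ℝ → ℂ} (hf : memE β μ f) (x : ℝ) :
    ‖f x‖ ≤ Enorm β μ f * (1 + |x|) ^ (-μ) * Real.exp (-(β * |x|)) := by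
  have h := le_ciSup hf.2 x
  have hA : (0:ℝ) < (1 + |x|) ^ μ := Real.rpow_pos_of_pos (by positivity) μ
  have hB : (0:ℝ) < Real.exp (β * |x|) := Real.exp_pos _
  rw [Real.rpow_neg (by positivity), Real.exp_neg]
  calc ‖f x‖
      = ((1 + |x|) ^ μ * Real.exp (β * |x|) * ‖f x‖) *
          ((1 + |x|) ^ μ)⁻¹ * (Real.exp (β * |x|))⁻¹ := by field_simp
    _ ≤ (⨆ m : ℝ, (1 + |m|) ^ μ * Real.exp (β * |m|) * ‖f m‖) *
          ((1 + |x|) ^ μ)⁻¹ * (Real.exp (β * |x|))⁻¹ := by gcongr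
    _ = Enorm β μ f * ((1 + |x|) ^ μ)⁻¹ * (Real.exp (β * |x|))⁻¹ := rfl

lemma eval_I_continuous (P : Polynomial ℂ) :
    Continuous fun x : ℝ => P.eval (Complex.I * (x : ℂ)) :=
  (P.continuous_aeval).comp (continuous_const.mul Complex.continuous_ofReal)

/-- The product `f ⋆ g (m) = (1/R(im)) ∫ Q₁(i(m−m₁)) f(m−m₁) Q₂(im₁) g(m₁) dm₁`. -/
noncomputable def star (Q₁ Q₂ R : Polynomial ℂ) (f g : ℝ → ℂ) (m : ℝ) : ℂ :=
  (R.eval (Complex.I * (m : ℂ)))⁻¹ *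
    ∫ m₁ : ℝ, Q₁.eval (Complex.I * ((m - m₁ : ℝ) : ℂ)) * f (m - m₁) *
      (Q₂.eval (Complex.I * (m₁ : ℂ)) * g m₁)

lemma star_apply (Q₁ Q₂ R : Polynomial ℂ) (f g : ℝ → ℂ) (m : ℝ) :
    star Q₁ Q₂ R f g m = (R.eval (Complex.I * (m : ℂ)))⁻¹ *
      ∫ m₁ : ℝ, Q₁.eval (Complex.I * ((m - m₁ : ℝ) : ℂ)) * f (m - m₁) *
        (Q₂.eval (Complex.I * (m₁ : ℂ)) * g m₁) := rfl

/-- The product `⋆` makes `E_{(β,μ)}` into a Banach algebra (up to rescaling the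
norm by `C₅`): it is well defined, bilinear, and satisfies `‖f⋆g‖ ≤ C₅‖f‖‖g‖`. -/
theorem star_banach_algebra (β μ : ℝ) (hβ : 0 < β)
    (Q₁ Q₂ R : Polynomial ℂ)
    (hdeg₁ : Q₁.degree ≤ R.degree) (hdeg₂ : Q₂.degree ≤ R.degree)
    (hR : ∀ m : ℝ, R.eval (Complex.I * (m : ℂ)) ≠ 0)
    (hμ : (max (Q₁.natDegree + 1) (Q₂.natDegree + 1) : ℝ) < μ) :
    -- well-definedness
    (∀ f g : ℝ → ℂ, memE β μ f → memE β μ g → ∀ m : ℝ,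
      Integrable (fun m₁ : ℝ =>
        Q₁.eval (Complex.I * ((m - m₁ : ℝ) : ℂ)) * f (m - m₁) *
          (Q₂.eval (Complex.I * (m₁ : ℂ)) * g m₁))) ∧
    -- additivity in the first argument
    (∀ f f' g : ℝ → ℂ, memE β μ f → memE β μ f' → memE β μ g → ∀ m : ℝ,
      star Q₁ Q₂ R (fun x => f x + f' x) g m
        = star Q₁ Q₂ R f g m + star Q₁ Q₂ R f' g m) ∧
    -- additivity in the second argument
    (∀ f g g' : ℝ → ℂ, memE β μ f → memE β μ g → memE β μ g' → ∀ m : ℝ,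
      star Q₁ Q₂ R f (fun x => g x + g' x) m
        = star Q₁ Q₂ R f g m + star Q₁ Q₂ R f g' m) ∧
    -- homogeneity in each argument
    (∀ (c : ℂ) (f g : ℝ → ℂ), memE β μ f → memE β μ g → ∀ m : ℝ,
      star Q₁ Q₂ R (fun x => c * f x) g m = c * star Q₁ Q₂ R f g m ∧
      star Q₁ Q₂ R f (fun x => c * g x) m = c * star Q₁ Q₂ R f g m) ∧
    -- the norm bound, with membership
    (∃ C₅ : ℝ, 0 < C₅ ∧ ∀ f g : ℝ → ℂ, memE β μ f → memE β μ g →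
      memE β μ (star Q₁ Q₂ R f g) ∧
      Enorm β μ (star Q₁ Q₂ R f g) ≤ C₅ * Enorm β μ f * Enorm β μ g) := by
  obtain ⟨C₁, hC₁, hQ₁⟩ := poly_upper Q₁
  obtain ⟨C₂, hC₂, hQ₂⟩ := poly_upper Q₂
  obtain ⟨c, hc, hRlow⟩ := poly_lower R hR
  have hμ₁ : (Q₁.natDegree : ℝ) + 1 < μ := by
    refine lt_of_le_of_lt ?_ hμ; push_cast; exact le_max_left _ _
  have hμ₂ : (Q₂.natDegree : ℝ) + 1 < μ := by
    refine lt_of_le_of_lt ?_ hμ; push_cast; exact le_max_right _ _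
  have ha : 1 < μ - (Q₁.natDegree : ℝ) := by linarith
  have hb : 1 < μ - (Q₂.natDegree : ℝ) := by linarith
  obtain ⟨K, hK, hconv⟩ := conv_bound ha hb
  -- the key pointwise bound on the integrand
  have key : ∀ (f g : ℝ → ℂ), memE β μ f → memE β μ g → ∀ (m t : ℝ),
      ‖Q₁.eval (Complex.I * ((m - t : ℝ) : ℂ)) * f (m - t) *
        (Q₂.eval (Complex.I * (t : ℂ)) * g t)‖ ≤
      C₁ * C₂ * Enorm β μ f * Enorm β μ g * Real.exp (-(β * |m|)) *
        ((1 + |m - t|) ^ (-(μ - (Q₁.natDegree : ℝ))) *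
          (1 + |t|) ^ (-(μ - (Q₂.natDegree : ℝ)))) := by
    intro f g hf hg m t
    have h1 := hQ₁ (m - t)
    have h2 := memE_pointwise hf (m - t)
    have h3 := hQ₂ t
    have h4 := memE_pointwise hg t
    have hEf := Enorm_nonneg hf
    have hEg := Enorm_nonneg hg
    have e1 : Real.exp (-(β * |m - t|)) * Real.exp (-(β * |t|)) ≤ Real.exp (-(β * |m|)) := by
      rw [← Real.exp_add]
      apply Real.exp_le_exp.mpr
      have habs : |m| ≤ |m - t| + |t| := by
        have := abs_add_le (m - t) t; rwa [sub_add_cancel] at this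
      nlinarith [hβ.le]
    have c1 : (1 + |m - t|) ^ ((Q₁.natDegree : ℝ)) * (1 + |m - t|) ^ (-μ) =
        (1 + |m - t|) ^ (-(μ - (Q₁.natDegree : ℝ))) := by
      rw [← Real.rpow_add (by positivity)]; ring_nf
    have c2 : (1 + |t|) ^ ((Q₂.natDegree : ℝ)) * (1 + |t|) ^ (-μ) =
        (1 + |t|) ^ (-(μ - (Q₂.natDegree : ℝ))) := by
      rw [← Real.rpow_add (by positivity)]; ring_nf
    rw [norm_mul, norm_mul, norm_mul]
    calc ‖Q₁.eval (Complex.I * ((m - t : ℝ) : ℂ))‖ * ‖f (m - t)‖ *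
          (‖Q₂.eval (Complex.I * (t : ℂ))‖ * ‖g t‖)
        ≤ (C₁ * (1 + |m - t|) ^ ((Q₁.natDegree : ℝ))) *
            (Enorm β μ f * (1 + |m - t|) ^ (-μ) * Real.exp (-(β * |m - t|))) *
            ((C₂ * (1 + |t|) ^ ((Q₂.natDegree : ℝ))) *
              (Enorm β μ g * (1 + |t|) ^ (-μ) * Real.exp (-(β * |t|)))) := by
          refine mul_le_mul (mul_le_mul h1 h2 (norm_nonneg _) (by positivity))
            (mul_le_mul h3 h4 (norm_nonneg _) (by positivity))
            (mul_nonneg (norm_nonneg _) (norm_nonneg _)) ?_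
          exact mul_nonneg (mul_nonneg hC₁.le (Real.rpow_nonneg (by positivity) _))
            (mul_nonneg (mul_nonneg hEf (Real.rpow_nonneg (by positivity) _))
              (Real.exp_pos _).le)
      _ = (C₁ * C₂ * Enorm β μ f * Enorm β μ g) *
            (Real.exp (-(β * |m - t|)) * Real.exp (-(β * |t|))) *
            (((1 + |m - t|) ^ ((Q₁.natDegree : ℝ)) * (1 + |m - t|) ^ (-μ)) *
              ((1 + |t|) ^ ((Q₂.natDegree : ℝ)) * (1 + |t|) ^ (-μ))) := by ring
      _ ≤ (C₁ * C₂ * Enorm β μ f * Enorm β μ g) * Real.exp (-(β * |m|)) *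
            (((1 + |m - t|) ^ ((Q₁.natDegree : ℝ)) * (1 + |m - t|) ^ (-μ)) *
              ((1 + |t|) ^ ((Q₂.natDegree : ℝ)) * (1 + |t|) ^ (-μ))) := by
          refine mul_le_mul_of_nonneg_right (mul_le_mul_of_nonneg_left e1 ?_) ?_
          · exact mul_nonneg (mul_nonneg (mul_nonneg hC₁.le hC₂.le) hEf) hEg
          · positivity
      _ = C₁ * C₂ * Enorm β μ f * Enorm β μ g * Real.exp (-(β * |m|)) *
            ((1 + |m - t|) ^ (-(μ - (Q₁.natDegree : ℝ))) *
              (1 + |t|) ^ (-(μ - (Q₂.natDegree : ℝ)))) := by rw [c1, c2]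
  -- uniform (in m) norm bound on the integrand
  have keyU : ∀ (f g : ℝ → ℂ), memE β μ f → memE β μ g → ∀ (m t : ℝ),
      ‖Q₁.eval (Complex.I * ((m - t : ℝ) : ℂ)) * f (m - t) *
        (Q₂.eval (Complex.I * (t : ℂ)) * g t)‖ ≤
      C₁ * C₂ * Enorm β μ f * Enorm β μ g * (1 + |t|) ^ (-(μ - (Q₂.natDegree : ℝ))) := by
    intro f g hf hg m t
    have hA : (0:ℝ) ≤ C₁ * C₂ * Enorm β μ f * Enorm β μ g :=
      mul_nonneg (mul_nonneg (mul_nonneg hC₁.le hC₂.le) (Enorm_nonneg hf)) (Enorm_nonneg hg)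
    refine le_trans (key f g hf hg m t) ?_
    have h1 : Real.exp (-(β * |m|)) ≤ 1 := by
      rw [Real.exp_le_one_iff]
      have : (0:ℝ) ≤ β * |m| := mul_nonneg hβ.le (abs_nonneg m)
      linarith
    have h2 : (1 + |m - t|) ^ (-(μ - (Q₁.natDegree : ℝ))) ≤ 1 :=
      Real.rpow_le_one_of_one_le_of_nonpos (one_le_one_add_abs _) (by linarith)
    calc C₁ * C₂ * Enorm β μ f * Enorm β μ g * Real.exp (-(β * |m|)) *
          ((1 + |m - t|) ^ (-(μ - (Q₁.natDegree : ℝ))) *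
            (1 + |t|) ^ (-(μ - (Q₂.natDegree : ℝ))))
        ≤ C₁ * C₂ * Enorm β μ f * Enorm β μ g * 1 *
          (1 * (1 + |t|) ^ (-(μ - (Q₂.natDegree : ℝ)))) := by
          refine mul_le_mul (mul_le_mul_of_nonneg_left h1 hA)
            (mul_le_mul_of_nonneg_right h2 (Real.rpow_nonneg (by positivity) _))
            (by positivity) (by nlinarith)
      _ = C₁ * C₂ * Enorm β μ f * Enorm β μ g * (1 + |t|) ^ (-(μ - (Q₂.natDegree : ℝ))) := by
          ring
  -- continuity of the integrand in t
  have contT : ∀ (f g : ℝ → ℂ), Continuous f → Continuous g → ∀ m : ℝ,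
      Continuous (fun t : ℝ => Q₁.eval (Complex.I * ((m - t : ℝ) : ℂ)) * f (m - t) *
        (Q₂.eval (Complex.I * (t : ℂ)) * g t)) := by
    intro f g hf hg m
    have hsub : Continuous fun t : ℝ => m - t := continuous_const.sub continuous_id
    exact (((eval_I_continuous Q₁).comp hsub).mul (hf.comp hsub)).mul
      ((eval_I_continuous Q₂).mul hg)
  -- integrability of the integrand
  have hint : ∀ f g : ℝ → ℂ, memE β μ f → memE β μ g → ∀ m : ℝ,
      Integrable (fun m₁ : ℝ =>
        Q₁.eval (Complex.I * ((m - m₁ : ℝ) : ℂ)) * f (m - m₁) *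
          (Q₂.eval (Complex.I * (m₁ : ℂ)) * g m₁)) := by
    intro f g hf hg m
    refine ((integrable_japanese hb).const_mul
      (C₁ * C₂ * Enorm β μ f * Enorm β μ g)).mono
      ((contT f g hf.1 hg.1 m).aestronglyMeasurable)
      (Filter.Eventually.of_forall fun t => ?_)
    have hA : (0:ℝ) ≤ C₁ * C₂ * Enorm β μ f * Enorm β μ g :=
      mul_nonneg (mul_nonneg (mul_nonneg hC₁.le hC₂.le) (Enorm_nonneg hf)) (Enorm_nonneg hg)
    rw [Real.norm_eq_abs, _root_.abs_of_nonneg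
      (mul_nonneg hA (Real.rpow_nonneg (by positivity) _))]
    exact keyU f g hf hg m t
  refine ⟨hint, ?_, ?_, ?_, ?_⟩
  · -- additivity in first argument
    intro f f' g hf hf' hg m
    have h1 := hint f g hf hg m
    have h2 := hint f' g hf' hg m
    simp only [star_apply]
    rw [show (fun m₁ : ℝ => Q₁.eval (Complex.I * ((m - m₁ : ℝ) : ℂ)) *
          (fun x => f x + f' x) (m - m₁) * (Q₂.eval (Complex.I * (m₁ : ℂ)) * g m₁)) =
        fun m₁ : ℝ => (Q₁.eval (Complex.I * ((m - m₁ : ℝ) : ℂ)) * f (m - m₁) *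
          (Q₂.eval (Complex.I * (m₁ : ℂ)) * g m₁)) +
          (Q₁.eval (Complex.I * ((m - m₁ : ℝ) : ℂ)) * f' (m - m₁) *
          (Q₂.eval (Complex.I * (m₁ : ℂ)) * g m₁)) from funext fun t => by simp; ring]
    rw [integral_add h1 h2, mul_add]
  · -- additivity in second argument
    intro f g g' hf hg hg' m
    have h1 := hint f g hf hg m
    have h2 := hint f g' hf hg' m
    simp only [star_apply]
    rw [show (fun m₁ : ℝ => Q₁.eval (Complex.I * ((m - m₁ : ℝ) : ℂ)) * f (m - m₁) *
          (Q₂.eval (Complex.I * (m₁ : ℂ)) * (fun x => g x + g' x) m₁)) =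
        fun m₁ : ℝ => (Q₁.eval (Complex.I * ((m - m₁ : ℝ) : ℂ)) * f (m - m₁) *
          (Q₂.eval (Complex.I * (m₁ : ℂ)) * g m₁)) +
          (Q₁.eval (Complex.I * ((m - m₁ : ℝ) : ℂ)) * f (m - m₁) *
          (Q₂.eval (Complex.I * (m₁ : ℂ)) * g' m₁)) from funext fun t => by simp; ring]
    rw [integral_add h1 h2, mul_add]
  · -- homogeneity
    intro cc f g hf hg m
    constructor
    · simp only [star_apply]
      rw [show (fun m₁ : ℝ => Q₁.eval (Complex.I * ((m - m₁ : ℝ) : ℂ)) *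
            (fun x => cc * f x) (m - m₁) * (Q₂.eval (Complex.I * (m₁ : ℂ)) * g m₁)) =
          fun m₁ : ℝ => cc * (Q₁.eval (Complex.I * ((m - m₁ : ℝ) : ℂ)) * f (m - m₁) *
            (Q₂.eval (Complex.I * (m₁ : ℂ)) * g m₁)) from funext fun t => by simp; ring]
      rw [integral_const_mul]; ring
    · simp only [star_apply]
      rw [show (fun m₁ : ℝ => Q₁.eval (Complex.I * ((m - m₁ : ℝ) : ℂ)) * f (m - m₁) *
            (Q₂.eval (Complex.I * (m₁ : ℂ)) * (fun x => cc * g x) m₁)) =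
          fun m₁ : ℝ => cc * (Q₁.eval (Complex.I * ((m - m₁ : ℝ) : ℂ)) * f (m - m₁) *
            (Q₂.eval (Complex.I * (m₁ : ℂ)) * g m₁)) from funext fun t => by simp; ring]
      rw [integral_const_mul]; ring
  · -- the norm bound
    refine ⟨C₁ * C₂ * K / c + 1, by positivity, fun f g hf hg => ?_⟩
    have hEf := Enorm_nonneg hf
    have hEg := Enorm_nonneg hg
    have hA : (0:ℝ) ≤ C₁ * C₂ * Enorm β μ f * Enorm β μ g :=
      mul_nonneg (mul_nonneg (mul_nonneg hC₁.le hC₂.le) hEf) hEg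
    have hdn₁ : (Q₁.natDegree : ℝ) ≤ (R.natDegree : ℝ) :=
      Nat.cast_le.mpr (Polynomial.natDegree_le_natDegree hdeg₁)
    have hdn₂ : (Q₂.natDegree : ℝ) ≤ (R.natDegree : ℝ) :=
      Nat.cast_le.mpr (Polynomial.natDegree_le_natDegree hdeg₂)
    -- pointwise bound on the weighted star
    have hpt : ∀ m : ℝ, (1 + |m|) ^ μ * Real.exp (β * |m|) *
        ‖star Q₁ Q₂ R f g m‖ ≤
        (C₁ * C₂ * K / c + 1) * Enorm β μ f * Enorm β μ g := by
      intro m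
      have hRpos : 0 < ‖R.eval (Complex.I * (m : ℂ))‖ :=
        norm_pos_iff.mpr (hR m)
      have int1 := hint f g hf hg m
      have intconv : Integrable (fun t : ℝ =>
          (1 + |m - t|) ^ (-(μ - (Q₁.natDegree : ℝ))) *
            (1 + |t|) ^ (-(μ - (Q₂.natDegree : ℝ)))) := integrable_conv ha hb m
      have hIntBd : ‖∫ t : ℝ, Q₁.eval (Complex.I * ((m - t : ℝ) : ℂ)) * f (m - t) *
            (Q₂.eval (Complex.I * (t : ℂ)) * g t)‖ ≤
          C₁ * C₂ * Enorm β μ f * Enorm β μ g * Real.exp (-(β * |m|)) *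
            (K * (1 + |m|) ^ (-(min (μ - (Q₁.natDegree : ℝ)) (μ - (Q₂.natDegree : ℝ))))) := by
        have step1 : ‖∫ t : ℝ, Q₁.eval (Complex.I * ((m - t : ℝ) : ℂ)) * f (m - t) *
              (Q₂.eval (Complex.I * (t : ℂ)) * g t)‖ ≤
            C₁ * C₂ * Enorm β μ f * Enorm β μ g * Real.exp (-(β * |m|)) *
              ∫ t : ℝ, (1 + |m - t|) ^ (-(μ - (Q₁.natDegree : ℝ))) *
                (1 + |t|) ^ (-(μ - (Q₂.natDegree : ℝ))) := by
          refine le_trans (norm_integral_le_integral_norm _) ?_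
          rw [← integral_const_mul]
          refine integral_mono int1.norm (intconv.const_mul _) fun t => ?_
          have := key f g hf hg m t
          calc ‖Q₁.eval (Complex.I * ((m - t : ℝ) : ℂ)) * f (m - t) *
                (Q₂.eval (Complex.I * (t : ℂ)) * g t)‖ ≤ _ := this
            _ = C₁ * C₂ * Enorm β μ f * Enorm β μ g * Real.exp (-(β * |m|)) *
                ((1 + |m - t|) ^ (-(μ - (Q₁.natDegree : ℝ))) *
                  (1 + |t|) ^ (-(μ - (Q₂.natDegree : ℝ)))) := rfl
        refine le_trans step1 ?_
        exact mul_le_mul_of_nonneg_left (hconv m)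
          (mul_nonneg hA (Real.exp_pos _).le)
      -- now assemble
      have hrinv : (‖R.eval (Complex.I * (m : ℂ))‖)⁻¹ ≤
          c⁻¹ * (1 + |m|) ^ (-(R.natDegree : ℝ)) := by
        rw [Real.rpow_neg (by positivity), ← mul_inv]
        exact inv_anti₀ (by positivity) (hRlow m)
      have hexp : Real.exp (β * |m|) * Real.exp (-(β * |m|)) = 1 := by
        rw [← Real.exp_add]; simp
      have hpow : (1 + |m|) ^ μ *
          (1 + |m|) ^ (-(min (μ - (Q₁.natDegree : ℝ)) (μ - (Q₂.natDegree : ℝ)))) *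
          (1 + |m|) ^ (-(R.natDegree : ℝ)) ≤ 1 := by
        rw [← Real.rpow_add (by positivity), ← Real.rpow_add (by positivity)]
        apply Real.rpow_le_one_of_one_le_of_nonpos (one_le_one_add_abs m)
        rcases le_total (μ - (Q₁.natDegree : ℝ)) (μ - (Q₂.natDegree : ℝ)) with h | h
        · rw [min_eq_left h]; linarith
        · rw [min_eq_right h]; linarith
      have hT : (0:ℝ) ≤ C₁ * C₂ * K / c * Enorm β μ f * Enorm β μ g := by
        have : (0:ℝ) ≤ C₁ * C₂ * K / c := by positivity
        exact mul_nonneg (mul_nonneg this hEf) hEg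
      calc (1 + |m|) ^ μ * Real.exp (β * |m|) * ‖star Q₁ Q₂ R f g m‖
          = (1 + |m|) ^ μ * Real.exp (β * |m|) *
              ((‖R.eval (Complex.I * (m : ℂ))‖)⁻¹ *
                ‖∫ t : ℝ, Q₁.eval (Complex.I * ((m - t : ℝ) : ℂ)) * f (m - t) *
                  (Q₂.eval (Complex.I * (t : ℂ)) * g t)‖) := by
            rw [star_apply, norm_mul, norm_inv]
        _ ≤ (1 + |m|) ^ μ * Real.exp (β * |m|) *
              ((c⁻¹ * (1 + |m|) ^ (-(R.natDegree : ℝ))) *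
                (C₁ * C₂ * Enorm β μ f * Enorm β μ g * Real.exp (-(β * |m|)) *
                  (K * (1 + |m|) ^ (-(min (μ - (Q₁.natDegree : ℝ)) (μ - (Q₂.natDegree : ℝ))))))) := by
            refine mul_le_mul_of_nonneg_left ?_ (by positivity)
            refine mul_le_mul hrinv hIntBd (norm_nonneg _) ?_
            positivity
        _ = (C₁ * C₂ * K / c * Enorm β μ f * Enorm β μ g) *
              ((1 + |m|) ^ μ *
                (1 + |m|) ^ (-(min (μ - (Q₁.natDegree : ℝ)) (μ - (Q₂.natDegree : ℝ)))) *
                (1 + |m|) ^ (-(R.natDegree : ℝ))) *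
              (Real.exp (β * |m|) * Real.exp (-(β * |m|))) := by
            field_simp
        _ = (C₁ * C₂ * K / c * Enorm β μ f * Enorm β μ g) *
              ((1 + |m|) ^ μ *
                (1 + |m|) ^ (-(min (μ - (Q₁.natDegree : ℝ)) (μ - (Q₂.natDegree : ℝ)))) *
                (1 + |m|) ^ (-(R.natDegree : ℝ))) := by rw [hexp, mul_one]
        _ ≤ (C₁ * C₂ * K / c * Enorm β μ f * Enorm β μ g) * 1 :=
            mul_le_mul_of_nonneg_left hpow hT
        _ = C₁ * C₂ * K / c * Enorm β μ f * Enorm β μ g := mul_one _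
        _ ≤ (C₁ * C₂ * K / c + 1) * Enorm β μ f * Enorm β μ g := by
            nlinarith [mul_nonneg hEf hEg]
    constructor
    · constructor
      · -- continuity of star f g
        have hc1 : Continuous fun m : ℝ => (R.eval (Complex.I * (m : ℂ)))⁻¹ :=
          (eval_I_continuous R).inv₀ hR
        have hc2 : Continuous fun m : ℝ =>
            ∫ t : ℝ, Q₁.eval (Complex.I * ((m - t : ℝ) : ℂ)) * f (m - t) *
              (Q₂.eval (Complex.I * (t : ℂ)) * g t) := by
          apply continuous_of_dominated
            (bound := fun t : ℝ => C₁ * C₂ * Enorm β μ f * Enorm β μ g *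
              (1 + |t|) ^ (-(μ - (Q₂.natDegree : ℝ))))
          · intro m
            exact (contT f g hf.1 hg.1 m).aestronglyMeasurable
          · intro m
            exact Filter.Eventually.of_forall fun t => keyU f g hf hg m t
          · exact (integrable_japanese hb).const_mul _
          · refine Filter.Eventually.of_forall fun t => ?_
            have hsub : Continuous fun m : ℝ => m - t := continuous_id.sub continuous_const
            exact (((eval_I_continuous Q₁).comp hsub).mul (hf.1.comp hsub)).mul
              continuous_const
        exact hc1.mul hc2
      · -- BddAbove
        exact ⟨(C₁ * C₂ * K / c + 1) * Enorm β μ f * Enorm β μ g, by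
          rintro v ⟨m, rfl⟩; exact hpt m⟩
    · exact ciSup_le hpt
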